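/- For every field F, all integers d ≥ 1 and 1 ≤ m ≤ d, and every vector ψ ∈ F^d, the rank of the repair-encoder matrix Ξ^{ψ,m} is at most the binomial coefficient C(d−1, m−1). -/

import Mathlib

/-- `ind S x = |{y ∈ S : y ≤ x}|`. -/
def ind (S : Finset ℕ) (x : ℕ) : ℕ := (S.filter (fun y => y ≤ x)).card

/-- The repair-encoder matrix `Ξ^{ψ,m}`: rows indexed by `m`-element subsets `I` of `{1,…,d}`,
columns indexed by `(m-1)`-element subsets `J` of `{1,…,d}`; entry `(-1)^{ind(I,x)} ψ_x`
if `I = J ∪ {x}` (with `x ∉ J`), and `0` otherwise. -/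
def Xi (F : Type*) [Field F] (d m : ℕ) (ψ : ℕ → F) :
    Matrix ↥((Finset.Icc 1 d).powersetCard m) ↥((Finset.Icc 1 d).powersetCard (m - 1)) F :=
  fun I J => ∑ x ∈ I.val \ J.val,
    if I.val = insert x J.val then (-1 : F) ^ (ind I.val x) * ψ x else 0

section Aux

variable {F : Type*} [Field F]

/-- The raw entry function of the matrix `Xi`. -/
def Ent (ψ : ℕ → F) (A B : Finset ℕ) : F :=
  ∑ y ∈ A \ B, if A = insert y B then (-1 : F) ^ (ind A y) * ψ y else 0

lemma sign_erase_le (T : Finset ℕ) {a b : ℕ} (ha : a ∈ T) (hab : a ≤ b) :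
    ((-1 : F) ^ ind (T.erase a) b) = -((-1 : F) ^ ind T b) := by
  have h : ind (T.erase a) b + 1 = ind T b := by
    unfold ind
    rw [Finset.filter_erase]
    exact Finset.card_erase_add_one (Finset.mem_filter.mpr ⟨ha, hab⟩)
  rw [← h, pow_succ]
  ring

lemma sign_erase_gt (T : Finset ℕ) {a b : ℕ} (hab : ¬ b ≤ a) :
    ((-1 : F) ^ ind (T.erase b) a) = (-1 : F) ^ ind T a := by
  unfold ind
  rw [Finset.filter_erase, Finset.erase_eq_of_notMem]
  simp [hab]

/-- The summand in the `∂∘∂ = 0` computation. -/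
def Gd (ψ : ℕ → F) (T J : Finset ℕ) (p : ℕ × ℕ) : F :=
  if p.2 ∈ (T.erase p.1) \ J ∧ T.erase p.1 = insert p.2 J then
    (-1 : F) ^ ind T p.1 * ψ p.1 * ((-1 : F) ^ ind (T.erase p.1) p.2 * ψ p.2)
  else 0

lemma cond_symm {T J : Finset ℕ} {a b : ℕ} (ha : a ∈ T)
    (h1 : b ∈ (T.erase a) \ J) (h2 : T.erase a = insert b J) :
    a ∈ (T.erase b) \ J ∧ T.erase b = insert a J := by
  obtain ⟨hbe, hbJ⟩ := Finset.mem_sdiff.mp h1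
  have hba : b ≠ a := Finset.ne_of_mem_erase hbe
  have hbT : b ∈ T := Finset.mem_of_mem_erase hbe
  have haJ : a ∉ J := by
    intro haJ
    have : a ∈ T.erase a := by
      rw [h2]; exact Finset.mem_insert_of_mem haJ
    exact (Finset.notMem_erase a T) this
  have hT : T = insert a (insert b J) := by rw [← h2, Finset.insert_erase ha]
  constructor
  · exact Finset.mem_sdiff.mpr ⟨Finset.mem_erase.mpr ⟨hba.symm, ha⟩, haJ⟩
  · rw [hT, Finset.erase_insert_of_ne hba.symm, Finset.erase_insert hbJ]

lemma pair_cancel (ψ : ℕ → F) (T J : Finset ℕ) {a b : ℕ} (ha : a ∈ T) (hb : b ∈ T) :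
    Gd ψ T J (a, b) + Gd ψ T J (b, a) = 0 := by
  classical
  rcases eq_or_ne a b with rfl | hab
  · simp [Gd]
  by_cases hC : b ∈ (T.erase a) \ J ∧ T.erase a = insert b J
  · have hC' := cond_symm ha hC.1 hC.2
    rw [Gd, Gd]
    simp only [if_pos hC, if_pos hC']
    rcases hab.lt_or_gt with h | h
    · rw [sign_erase_le T ha h.le, sign_erase_gt T (not_le.mpr h)]
      ring
    · rw [sign_erase_le T hb h.le, sign_erase_gt T (not_le.mpr h)]
      ring
  · have hC' : ¬ (a ∈ (T.erase b) \ J ∧ T.erase b = insert a J) := by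
      intro h'
      exact hC (cond_symm hb h'.1 h'.2)
    rw [Gd, Gd]
    simp only [if_neg hC, if_neg hC']
    ring

lemma key (ψ : ℕ → F) (T J : Finset ℕ) :
    ∑ x ∈ T, (-1 : F) ^ ind T x * ψ x * Ent ψ (T.erase x) J = 0 := by
  classical
  have hstep : ∀ x, (-1 : F) ^ ind T x * ψ x * Ent ψ (T.erase x) J
      = ∑ y ∈ T, Gd ψ T J (x, y) := by
    intro x
    have hsub : (T.erase x) \ J ⊆ T :=
      Finset.sdiff_subset.trans (Finset.erase_subset _ _)
    rw [Ent, Finset.mul_sum]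
    rw [show (∑ y ∈ (T.erase x) \ J,
        (-1 : F) ^ ind T x * ψ x *
          (if T.erase x = insert y J then (-1 : F) ^ (ind (T.erase x) y) * ψ y else 0))
        = ∑ y ∈ (T.erase x) \ J, Gd ψ T J (x, y) from
      Finset.sum_congr rfl (fun y hy => by
        simp only [Gd, hy, true_and, mul_ite, mul_zero])]
    exact Finset.sum_subset hsub (fun y _ hy => by simp [Gd, hy])
  rw [Finset.sum_congr rfl (fun x _ => hstep x), ← Finset.sum_product']
  refine Finset.sum_involution (fun p _ => (p.2, p.1)) ?_ ?_ ?_ ?_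
  · intro p hp
    obtain ⟨h1, h2⟩ := Finset.mem_product.mp hp
    exact pair_cancel ψ T J h1 h2
  · intro p hp hne heq
    apply hne
    have hd : p.1 = p.2 := by
      have := congrArg Prod.fst heq
      simpa using this.symm
    rw [hd]
    simp [Gd]
  · intro p hp
    obtain ⟨h1, h2⟩ := Finset.mem_product.mp hp
    exact Finset.mem_product.mpr ⟨h2, h1⟩
  · intro p hp
    rfl

end Aux

theorem xi_rank_le (F : Type*) [Field F] (d m : ℕ) (hd : 1 ≤ d) (hm1 : 1 ≤ m) (hmd : m ≤ d)
    (ψ : ℕ → F) :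
    (Xi F d m ψ).rank ≤ (d - 1).choose (m - 1) := by
  classical
  by_cases hψ : ∀ x ∈ Finset.Icc 1 d, ψ x = 0
  · have hM : Xi F d m ψ = 0 := by
      funext I Jc
      apply Finset.sum_eq_zero
      intro x hx
      have hxs : x ∈ Finset.Icc 1 d :=
        (Finset.mem_powersetCard.mp I.2).1 (Finset.mem_sdiff.mp hx).1
      rw [hψ x hxs, mul_zero]
      simp
    rw [hM, Matrix.rank_zero]
    exact Nat.zero_le _
  push_neg at hψ
  obtain ⟨v, hvs, hv⟩ := hψ
  -- the family of rows indexed by (m-1)-subsets of (Icc 1 d).erase v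
  have hr_mem : ∀ A ∈ ((Finset.Icc 1 d).erase v).powersetCard (m - 1),
      insert v A ∈ (Finset.Icc 1 d).powersetCard m := by
    intro A hA
    obtain ⟨hAsub, hAcard⟩ := Finset.mem_powersetCard.mp hA
    obtain ⟨hAsub', hvA⟩ := Finset.subset_erase.mp hAsub
    refine Finset.mem_powersetCard.mpr ⟨Finset.insert_subset hvs hAsub', ?_⟩
    rw [Finset.card_insert_of_notMem hvA, hAcard]
    omega
  set r : ↥(((Finset.Icc 1 d).erase v).powersetCard (m - 1)) →
      (↥((Finset.Icc 1 d).powersetCard (m - 1)) → F) :=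
    fun A => Xi F d m ψ ⟨insert v A.val, hr_mem A.val A.2⟩ with hrdef
  have hrank : (Xi F d m ψ).rank
      = Module.finrank F (Submodule.span F (Set.range (Xi F d m ψ))) := by
    rw [← Matrix.rank_transpose, Matrix.rank_eq_finrank_span_cols]
    rfl
  have hspan : Submodule.span F (Set.range (Xi F d m ψ))
      ≤ Submodule.span F (Set.range r) := by
    rw [Submodule.span_le]
    rintro _ ⟨I, rfl⟩
    have hIs := Finset.mem_powersetCard.mp I.2
    by_cases hvI : v ∈ I.val
    · apply Submodule.subset_span
      refine ⟨⟨I.val.erase v, ?_⟩, ?_⟩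
      · refine Finset.mem_powersetCard.mpr ⟨Finset.erase_subset_erase v hIs.1, ?_⟩
        rw [Finset.card_erase_of_mem hvI, hIs.2]
      · show Xi F d m ψ ⟨insert v (I.val.erase v), _⟩ = Xi F d m ψ I
        exact congrArg _ (Subtype.ext (Finset.insert_erase hvI))
    · -- the main linear relation
      set T : Finset ℕ := insert v I.val with hT
      have hmem2 : ∀ x ∈ I.val,
          I.val.erase x ∈ ((Finset.Icc 1 d).erase v).powersetCard (m - 1) := by
        intro x hx
        refine Finset.mem_powersetCard.mpr ⟨?_, ?_⟩
        · exact Finset.subset_erase.mpr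
            ⟨(Finset.erase_subset _ _).trans hIs.1, fun h => hvI (Finset.mem_of_mem_erase h)⟩
        · rw [Finset.card_erase_of_mem hx, hIs.2]
      set K : F := (-1 : F) ^ ind T v * ψ v with hK
      have hKne : K ≠ 0 := mul_ne_zero (pow_ne_zero _ (neg_ne_zero.mpr one_ne_zero)) hv
      have hTx : ∀ x ∈ I.val, T.erase x = insert v (I.val.erase x) := by
        intro x hx
        rw [hT, Finset.erase_insert_of_ne (by rintro rfl; exact hvI hx)]
      have hrel : Xi F d m ψ I = ∑ x ∈ I.val.attach,
          (-(K⁻¹ * ((-1 : F) ^ ind T x.val * ψ x.val))) •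
            r ⟨I.val.erase x.val, hmem2 x.val x.2⟩ := by
        funext Jc
        have h0 := key ψ T Jc.val
        rw [hT] at h0
        rw [Finset.sum_insert hvI, Finset.erase_insert hvI, ← hT] at h0
        have hS : ∑ x ∈ I.val, (-1 : F) ^ ind T x * ψ x * Ent ψ (T.erase x) Jc.val
            = -(K * Ent ψ I.val Jc.val) := by
          rw [hK]
          linear_combination h0
        have hRHS : (∑ x ∈ I.val.attach,
            (-(K⁻¹ * ((-1 : F) ^ ind T x.val * ψ x.val))) •
              r ⟨I.val.erase x.val, hmem2 x.val x.2⟩) Jc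
            = ∑ x ∈ I.val, (-(K⁻¹ * ((-1 : F) ^ ind T x * ψ x))) *
                Ent ψ (insert v (I.val.erase x)) Jc.val := by
          rw [Finset.sum_apply]
          exact Finset.sum_attach I.val
            (fun x => (-(K⁻¹ * ((-1 : F) ^ ind T x * ψ x))) *
              Ent ψ (insert v (I.val.erase x)) Jc.val)
        show Ent ψ I.val Jc.val = _
        rw [hRHS]
        rw [Finset.sum_congr rfl (fun x hx => by rw [← hTx x hx])]
        rw [show (∑ x ∈ I.val, (-(K⁻¹ * ((-1 : F) ^ ind T x * ψ x))) *
              Ent ψ (T.erase x) Jc.val)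
            = -K⁻¹ * ∑ x ∈ I.val, (-1 : F) ^ ind T x * ψ x * Ent ψ (T.erase x) Jc.val from by
          rw [Finset.mul_sum]
          exact Finset.sum_congr rfl (fun x _ => by ring)]
        rw [hS]
        field_simp
      rw [hrel]
      apply Submodule.sum_mem
      intro x hx
      exact Submodule.smul_mem _ _ (Submodule.subset_span ⟨_, rfl⟩)
  have hfin : Module.finrank F (Submodule.span F (Set.range (Xi F d m ψ)))
      ≤ Module.finrank F (Submodule.span F (Set.range r)) :=
    Submodule.finrank_mono hspan
  have hcard : Module.finrank F (Submodule.span F (Set.range r))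
      ≤ Fintype.card ↥(((Finset.Icc 1 d).erase v).powersetCard (m - 1)) :=
    finrank_range_le_card r
  have hcount : Fintype.card ↥(((Finset.Icc 1 d).erase v).powersetCard (m - 1))
      = (d - 1).choose (m - 1) := by
    rw [Fintype.card_coe, Finset.card_powersetCard, Finset.card_erase_of_mem hvs,
      Nat.card_Icc]
    norm_num
  rw [hrank]
  omega
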